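/- Let G be a directed graph and let C be a maximum-cardinality packing of vertex-disjoint cycles each of length at most L (L ≥ 2). If a vertex v lies on some cycle of length at most L in G but is not covered by C, then there is a packing of cycles of length at most L covering v whose cardinality is at least the cardinality of C minus ((L−1)² − 1). -/

import Mathlib

/-- `c` is a directed cycle in the digraph with arc relation `E`. -/
def IsCycle {V : Type*} (E : V → V → Prop) (c : List V) : Prop :=
  c.Nodup ∧ 2 ≤ c.length ∧ c.Chain' E ∧ ∀ h : c ≠ [], E (c.getLast h) (c.head h)

/-- `P` is a packing of vertex-disjoint directed cycles. -/
def IsPacking {V : Type*} (E : V → V → Prop) (P : List (List V)) : Prop :=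
  (∀ c ∈ P, IsCycle E c) ∧ P.Pairwise (fun c d => ∀ v ∈ c, v ∉ d)

/-- The cardinality of a packing: the total number of covered vertices. -/
def packCard {V : Type*} (P : List (List V)) : ℕ := (P.map List.length).sum

/-- `v` is covered by the packing `P`. -/
def Covered {V : Type*} (P : List (List V)) (v : V) : Prop := ∃ c ∈ P, v ∈ c

/-- If `P` is a maximum-cardinality packing of cycles of length at most `L` (`L ≥ 2`)
and `v` lies on some cycle of length at most `L` but is uncovered by `P`, then some
packing of cycles of length at most `L` covers `v` with cardinality at least
`packCard P − ((L−1)² − 1)`. -/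
theorem stmt3 {V : Type*} (E : V → V → Prop) (L : ℕ) (hL : 2 ≤ L)
    (P : List (List V))
    (hP : IsPacking E P) (hlen : ∀ c ∈ P, c.length ≤ L)
    (hmax : ∀ Q : List (List V), IsPacking E Q → (∀ c ∈ Q, c.length ≤ L) →
      packCard Q ≤ packCard P)
    (v : V) (c : List V) (hc : IsCycle E c) (hlc : c.length ≤ L)
    (hvc : v ∈ c) (hv : ¬ Covered P v) :
    ∃ Q : List (List V), IsPacking E Q ∧ (∀ d ∈ Q, d.length ≤ L) ∧
      Covered Q v ∧ packCard P ≤ packCard Q + ((L - 1) ^ 2 - 1) := by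
  classical
  set p : List V → Bool := fun d => decide (∀ x ∈ d, x ∉ c) with hp
  set A : List (List V) := P.filter p with hA
  set R : List (List V) := P.filter (fun d => !p d) with hR
  have hAmem : ∀ d ∈ A, d ∈ P ∧ ∀ x ∈ d, x ∉ c := by
    intro d hd
    rw [hA, List.mem_filter] at hd
    exact ⟨hd.1, by simpa [hp] using hd.2⟩
  have hRmem : ∀ d ∈ R, d ∈ P ∧ ∃ x ∈ d, x ∈ c := by
    intro d hd
    rw [hR, List.mem_filter] at hd
    refine ⟨hd.1, ?_⟩
    have := hd.2
    simp only [hp, Bool.not_eq_true', decide_eq_false_iff_not] at this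
    push_neg at this
    exact this
  refine ⟨c :: A, ?_, ?_, ⟨c, by simp, hvc⟩, ?_⟩
  · constructor
    · intro d hd
      rcases List.mem_cons.1 hd with h | h
      · exact h ▸ hc
      · exact hP.1 d (hAmem d h).1
    · rw [List.pairwise_cons]
      constructor
      · intro d hd x hx hxd
        exact (hAmem d hd).2 x hxd hx
      · exact hP.2.sublist List.filter_sublist
  · intro d hd
    rcases List.mem_cons.1 hd with h | h
    · exact h ▸ hlc
    · exact hlen d (hAmem d h).1
  · -- cardinality
    have hsplit : packCard A + packCard R = packCard P := by
      have := (List.filter_append_perm p P).map List.length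
      have := this.sum_eq
      simpa [packCard, hA, hR] using this
    -- intersections
    set f : List V → ℕ := fun d => (d.filter (fun x => decide (x ∈ c))).length with hf
    have hsum_inter : (R.map f).sum ≤ c.length - 1 := by
      set J : List V := (R.map (fun d => d.filter (fun x => decide (x ∈ c)))).flatten with hJ
      have hJlen : J.length = (R.map f).sum := by
        rw [hJ, List.length_flatten, List.map_map]; rfl
      have hJnd : J.Nodup := by
        rw [hJ, List.nodup_flatten]
        constructor
        · intro l hl
          rcases List.mem_map.1 hl with ⟨d, hd, rfl⟩
          exact ((hP.1 d (hRmem d hd).1).1).filter _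
        · have hpw : R.Pairwise (fun a b => ∀ x ∈ a, x ∉ b) :=
            hP.2.sublist List.filter_sublist
          refine (hpw.map _ ?_)
          intro a b hab x hxa hxb
          exact hab x (List.mem_of_mem_filter hxa) (List.mem_of_mem_filter hxb)
      have hJsub : J ⊆ c.erase v := by
        intro x hx
        rw [hJ, List.mem_flatten] at hx
        rcases hx with ⟨l, hl, hxl⟩
        rcases List.mem_map.1 hl with ⟨d, hd, rfl⟩
        have hxd : x ∈ d := List.mem_of_mem_filter hxl
        have hxc : x ∈ c := by simpa using List.of_mem_filter hxl
        have hxv : x ≠ v := by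
          rintro rfl
          exact hv ⟨d, (hRmem d hd).1, hxd⟩
        exact List.mem_erase_of_ne hxv |>.2 hxc
      have := (hJnd.subperm hJsub).length_le
      rwa [List.length_erase_of_mem hvc, hJlen] at this
    have hRlen : R.length ≤ (R.map f).sum := by
      have : ∀ x ∈ R.map f, 1 ≤ x := by
        intro x hx
        rcases List.mem_map.1 hx with ⟨d, hd, rfl⟩
        rcases (hRmem d hd).2 with ⟨y, hyd, hyc⟩
        have : y ∈ d.filter (fun x => decide (x ∈ c)) :=
          List.mem_filter.2 ⟨hyd, by simpa using hyc⟩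
        have := List.length_pos_of_mem this
        exact this
      calc R.length = (R.map f).length • 1 := by simp
        _ ≤ (R.map f).sum := List.card_nsmul_le_sum _ _ this
    have hterm : ∀ d ∈ R, d.length ≤ f d + (L - 1) := by
      intro d hd
      have hsplit2 : d.length = f d + (d.filter (fun x => !decide (x ∈ c))).length :=
        List.length_eq_length_filter_add (fun x => decide (x ∈ c))
      have h1 : 1 ≤ f d := by
        rcases (hRmem d hd).2 with ⟨y, hyd, hyc⟩
        have : y ∈ d.filter (fun x => decide (x ∈ c)) :=
          List.mem_filter.2 ⟨hyd, by simpa using hyc⟩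
        have := List.length_pos_of_mem this
        exact this
      have hdL : d.length ≤ L := hlen d (hRmem d hd).1
      omega
    have hRcard : packCard R ≤ (R.map f).sum + R.length * (L - 1) := by
      have : packCard R = (R.map List.length).sum := rfl
      rw [this]
      have key : ∀ l : List (List V), (∀ d ∈ l, d.length ≤ f d + (L - 1)) →
          (l.map List.length).sum ≤ (l.map f).sum + l.length * (L - 1) := by
        intro l
        induction l with
        | nil => simp
        | cons a t ih =>
          intro h
          have ha := h a (by simp)
          have ht := ih (fun d hd => h d (List.mem_cons_of_mem _ hd))
          simp only [List.map_cons, List.sum_cons, List.length_cons]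
          have : (t.length + 1) * (L - 1) = t.length * (L - 1) + (L - 1) := by ring
          omega
      exact key R hterm
    have hcl : 2 ≤ c.length := hc.2.1
    have hcl2 : c.length - 1 ≤ L - 1 := by omega
    have hbound : packCard R ≤ (c.length - 1) + (L - 1) * (L - 1) := by
      have h1 : R.length * (L - 1) ≤ (L - 1) * (L - 1) :=
        Nat.mul_le_mul_right _ (le_trans (le_trans hRlen hsum_inter) hcl2)
      omega
    have hQ : packCard (c :: A) = c.length + packCard A := by
      simp [packCard]
    have hsq : (L - 1) ^ 2 = (L - 1) * (L - 1) := sq (L - 1)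
    have h1 : 1 ≤ (L - 1) * (L - 1) := Nat.one_le_iff_ne_zero.2 (by
      have : 1 ≤ L - 1 := by omega
      positivity)
    rw [hQ, hsq]
    omega
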